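/- Fix an integer N ≥ 1, pairwise distinct complex numbers u_1, …, u_N, complex numbers x, y with x ∉ {u_1,…,u_N} and y ∉ {u_1,…,u_N} ∪ {x}, and an integer s ≥ 1. Then ∑_{k=1}^{N} 1/((u_k − y)^s·(x − u_k)·∏_{α ≠ k}(u_k − u_α)) = 1/((x − y)^s·∏_{α=1}^{N}(x − u_α)) − (1/(s−1)!)·(d^{s−1}/dy^{s−1})[ 1/((x − y)·∏_{α=1}^{N}(y − u_α)) ]. -/

import Mathlib

open Finset

private theorem lag_erase_zero_prod (n : ℕ) (f : Fin (n+1) → ℂ) :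
    ∏ i ∈ univ.erase 0, f i = ∏ α : Fin n, f α.succ := by
  rw [Fin.univ_succ, Finset.erase_cons, Finset.prod_map]; rfl

private theorem lag_erase_succ_prod (n : ℕ) (f : Fin (n+1) → ℂ) (k : Fin n) :
    ∏ i ∈ univ.erase k.succ, f i = f 0 * ∏ α ∈ univ.erase k, f α.succ := by
  have : (univ : Finset (Fin (n+1))).erase k.succ
      = Finset.cons 0 ((univ.erase k).map (Fin.succEmb n)) (by simp [Fin.succ_ne_zero]) := by
    ext i
    induction i using Fin.cases with
    | zero => simp [(Fin.succ_ne_zero k).symm, Fin.succ_ne_zero]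
    | succ j => simp [Fin.succ_inj, Fin.succ_ne_zero]
  rw [this, Finset.prod_cons, Finset.prod_map]; rfl

private theorem lag_sum (M : ℕ) (hM : 1 ≤ M) (v : Fin M → ℂ) (hv : Function.Injective v) (z : ℂ)
    (hz : ∀ i, z ≠ v i) :
    ∑ j : Fin M, (∏ i ∈ univ.erase j, (v j - v i))⁻¹ * (z - v j)⁻¹
      = (∏ i : Fin M, (z - v i))⁻¹ := by
  have hne : (univ : Finset (Fin M)).Nonempty := by
    simpa [Finset.univ_nonempty_iff] using Fin.pos_iff_nonempty.mp hM
  have h := Lagrange.sum_basis (v := v) hv.injOn hne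
  have h2 := congrArg (Polynomial.eval z) h
  simp only [Polynomial.eval_finset_sum, Polynomial.eval_one, Lagrange.basis,
    Polynomial.eval_prod, Lagrange.basisDivisor, Polynomial.eval_mul, Polynomial.eval_C,
    Polynomial.eval_sub, Polynomial.eval_X] at h2
  have hP : (∏ i : Fin M, (z - v i)) ≠ 0 :=
    Finset.prod_ne_zero_iff.mpr fun i _ => sub_ne_zero.mpr (hz i)
  have key : ∀ j : Fin M, ∏ i ∈ univ.erase j, ((v j - v i)⁻¹ * (z - v i))
      = (∏ i ∈ univ.erase j, (v j - v i))⁻¹ * ((∏ i : Fin M, (z - v i)) * (z - v j)⁻¹) := by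
    intro j
    rw [Finset.prod_mul_distrib, ← Finset.prod_inv_distrib]
    congr 1
    have := Finset.prod_erase_mul univ (fun i => z - v i) (mem_univ j)
    field_simp [sub_ne_zero.mpr (hz j)]
    linear_combination this
  have h3 : (∏ i : Fin M, (z - v i)) *
      (∑ j : Fin M, (∏ i ∈ univ.erase j, (v j - v i))⁻¹ * (z - v j)⁻¹) = 1 := by
    rw [Finset.mul_sum, ← h2]
    exact Finset.sum_congr rfl fun j _ => by rw [key j]; ring
  exact eq_inv_of_mul_eq_one_left (by linear_combination h3)

private theorem lag_pf (N : ℕ) (hN : 1 ≤ N) (u : Fin N → ℂ) (hu : Function.Injective u)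
    (x : ℂ) (hx : ∀ k, x ≠ u k) (w : ℂ) (hwx : w ≠ x) (hw : ∀ k, w ≠ u k) :
    ((x - w) * ∏ α : Fin N, (w - u α))⁻¹
      = (∏ α : Fin N, (x - u α))⁻¹ * (x - w)⁻¹
        + ∑ k : Fin N, ((x - u k) * ∏ α ∈ univ.erase k, (u k - u α))⁻¹ * (w - u k)⁻¹ := by
  set v : Fin (N+1) → ℂ := Fin.cons x u with hv
  have hvinj : Function.Injective v := by
    intro a b hab
    induction a using Fin.cases with
    | zero => induction b using Fin.cases with
      | zero => rfl
      | succ j => exact absurd hab (by simpa [hv] using hx j)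
    | succ i => induction b using Fin.cases with
      | zero => exact absurd hab.symm (by simpa [hv] using hx i)
      | succ j => simpa [hv, Fin.succ_inj] using congrArg Fin.succ (hu (by simpa [hv] using hab))
  have hz : ∀ i, w ≠ v i := by
    intro i; induction i using Fin.cases with
    | zero => simpa [hv] using hwx
    | succ j => simpa [hv] using hw j
  have h := lag_sum (N+1) (by omega) v hvinj w hz
  rw [Fin.sum_univ_succ, Fin.prod_univ_succ] at h
  simp only [hv, Fin.cons_zero, Fin.cons_succ, lag_erase_zero_prod, lag_erase_succ_prod] at h
  have e1 : ((x - w) * ∏ α : Fin N, (w - u α))⁻¹ = -((w - x) * ∏ α : Fin N, (w - u α))⁻¹ := by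
    rw [show (x - w) = -(w - x) by ring, neg_mul, inv_neg]
  rw [e1, ← h]
  have e2 : (∏ α : Fin N, (x - u α))⁻¹ * (x - w)⁻¹
      = -((∏ α : Fin N, (x - u α))⁻¹ * (w - x)⁻¹) := by
    rw [show (x - w) = -(w - x) by ring, inv_neg]; ring
  rw [e2, neg_add]
  congr 1
  rw [← Finset.sum_neg_distrib]
  refine Finset.sum_congr rfl fun k _ => ?_
  rw [show (u k - x) = -(x - u k) by ring, neg_mul, inv_neg]; ring

private theorem lag_iter (N : ℕ) (hN : 1 ≤ N) (u : Fin N → ℂ) (hu : Function.Injective u)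
    (x : ℂ) (hx : ∀ k, x ≠ u k) :
    ∀ m : ℕ, ∀ w : ℂ, w ≠ x → (∀ k, w ≠ u k) →
    iteratedDeriv m (fun w => ((x - w) * ∏ α : Fin N, (w - u α))⁻¹) w
      = (m.factorial : ℂ) * ((∏ α : Fin N, (x - u α))⁻¹ * ((x - w)^(m+1))⁻¹
          + (-1)^m * ∑ k : Fin N,
            ((x - u k) * ∏ α ∈ univ.erase k, (u k - u α))⁻¹ * ((w - u k)^(m+1))⁻¹) := by
  have hUopen : IsOpen (({x} ∪ Set.range u)ᶜ) :=
    (((Set.finite_singleton x).union (Set.finite_range u)).isClosed).isOpen_compl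
  intro m
  induction m with
  | zero =>
    intro w hwx hw
    simpa [iteratedDeriv_zero] using lag_pf N hN u hu x hx w hwx hw
  | succ m ih =>
    intro w hwx hw
    rw [iteratedDeriv_succ]
    have hmem : w ∈ ({x} ∪ Set.range u)ᶜ := by
      simp only [Set.mem_compl_iff, Set.mem_union, Set.mem_singleton_iff, Set.mem_range]
      push_neg
      exact ⟨hwx, fun k => (hw k).symm⟩
    have hev : iteratedDeriv m (fun w => ((x - w) * ∏ α : Fin N, (w - u α))⁻¹) =ᶠ[nhds w]
        (fun w' => (m.factorial : ℂ) * ((∏ α : Fin N, (x - u α))⁻¹ * ((x - w')^(m+1))⁻¹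
          + (-1)^m * ∑ k : Fin N,
            ((x - u k) * ∏ α ∈ univ.erase k, (u k - u α))⁻¹ * ((w' - u k)^(m+1))⁻¹)) := by
      filter_upwards [hUopen.mem_nhds hmem] with w' hw'
      simp only [Set.mem_compl_iff, Set.mem_union, Set.mem_singleton_iff, Set.mem_range] at hw'
      push_neg at hw'
      exact ih w' hw'.1 (fun k => (hw'.2 k).symm)
    rw [hev.deriv_eq]
    have hxw : x - w ≠ 0 := sub_ne_zero.mpr (Ne.symm hwx)
    have h1 : HasDerivAt (fun w' => ((x - w')^(m+1))⁻¹) (((m:ℂ)+1) * ((x - w)^(m+2))⁻¹) w := by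
      have hbase : HasDerivAt (fun w' : ℂ => x - w') (-1) w := (hasDerivAt_id w).const_sub x
      have hp := hbase.fun_pow (m+1)
      have hinv := hp.fun_inv (pow_ne_zero _ hxw)
      refine hinv.congr_deriv ?_
      simp only [Nat.add_sub_cancel, Nat.cast_add, Nat.cast_one]; field_simp
      ring
    have h2 : ∀ k : Fin N, HasDerivAt (fun w' => ((w' - u k)^(m+1))⁻¹)
        (-(((m:ℂ)+1) * ((w - u k)^(m+2))⁻¹)) w := by
      intro k
      have hwk : w - u k ≠ 0 := sub_ne_zero.mpr (hw k)
      have hbase : HasDerivAt (fun w' : ℂ => w' - u k) 1 w := (hasDerivAt_id w).sub_const (u k)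
      have hp := hbase.fun_pow (m+1)
      have hinv := hp.fun_inv (pow_ne_zero _ hwk)
      refine hinv.congr_deriv ?_
      simp only [Nat.add_sub_cancel, Nat.cast_add, Nat.cast_one]; field_simp
      ring
    have hsum : HasDerivAt (fun w' => ∑ k : Fin N,
        ((x - u k) * ∏ α ∈ univ.erase k, (u k - u α))⁻¹ * ((w' - u k)^(m+1))⁻¹)
        (∑ k : Fin N, ((x - u k) * ∏ α ∈ univ.erase k, (u k - u α))⁻¹ *
          (-(((m:ℂ)+1) * ((w - u k)^(m+2))⁻¹))) w :=
      HasDerivAt.fun_sum fun k _ => (h2 k).const_mul _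
    have total := ((h1.const_mul ((∏ α : Fin N, (x - u α))⁻¹)).fun_add
        (hsum.const_mul ((-1:ℂ)^m))).const_mul ((m.factorial : ℂ))
    rw [total.deriv]
    have hs : ∑ k : Fin N, ((x - u k) * ∏ α ∈ univ.erase k, (u k - u α))⁻¹ *
          (-(((m:ℂ)+1) * ((w - u k)^(m+2))⁻¹))
        = (-(((m:ℂ)+1))) * ∑ k : Fin N, ((x - u k) * ∏ α ∈ univ.erase k, (u k - u α))⁻¹ *
          ((w - u k)^(m+2))⁻¹ := by
      rw [Finset.mul_sum]
      exact Finset.sum_congr rfl fun k _ => by ring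
    rw [hs]
    push_cast [Nat.factorial_succ]
    ring

theorem stmt14 (N : ℕ) (hN : 1 ≤ N) (u : Fin N → ℂ) (hu : Function.Injective u)
    (x y : ℂ) (hx : ∀ k, x ≠ u k) (hy : ∀ k, y ≠ u k) (hxy : y ≠ x)
    (s : ℕ) (hs : 1 ≤ s) :
    ∑ k : Fin N,
        1 / ((u k - y) ^ s * (x - u k) * ∏ α ∈ univ.erase k, (u k - u α)) =
      1 / ((x - y) ^ s * ∏ α : Fin N, (x - u α)) -
        (1 / (Nat.factorial (s - 1) : ℂ)) *
          iteratedDeriv (s - 1)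
            (fun w => 1 / ((x - w) * ∏ α : Fin N, (w - u α))) y := by
  obtain ⟨m, rfl⟩ : ∃ m, s = m + 1 := ⟨s - 1, by omega⟩
  have hfun : (fun w => 1 / ((x - w) * ∏ α : Fin N, (w - u α)))
      = fun w => ((x - w) * ∏ α : Fin N, (w - u α))⁻¹ := by
    funext w; rw [one_div]
  rw [hfun, Nat.add_sub_cancel, lag_iter N hN u hu x hx m y hxy hy]
  have hfac : ((m.factorial : ℂ)) ≠ 0 := Nat.cast_ne_zero.mpr m.factorial_ne_zero
  rw [show (1 / (m.factorial : ℂ)) * ((m.factorial : ℂ) *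
      ((∏ α : Fin N, (x - u α))⁻¹ * ((x - y)^(m+1))⁻¹
        + (-1)^m * ∑ k : Fin N,
          ((x - u k) * ∏ α ∈ univ.erase k, (u k - u α))⁻¹ * ((y - u k)^(m+1))⁻¹))
      = (∏ α : Fin N, (x - u α))⁻¹ * ((x - y)^(m+1))⁻¹
        + (-1)^m * ∑ k : Fin N,
          ((x - u k) * ∏ α ∈ univ.erase k, (u k - u α))⁻¹ * ((y - u k)^(m+1))⁻¹ from by
    field_simp]
  have hD : 1 / ((x - y)^(m+1) * ∏ α : Fin N, (x - u α))
      = (∏ α : Fin N, (x - u α))⁻¹ * ((x - y)^(m+1))⁻¹ := by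
    rw [one_div, mul_inv]; ring
  rw [hD]
  rw [show (∏ α : Fin N, (x - u α))⁻¹ * ((x - y)^(m+1))⁻¹ -
      ((∏ α : Fin N, (x - u α))⁻¹ * ((x - y)^(m+1))⁻¹
        + (-1:ℂ)^m * ∑ k : Fin N,
          ((x - u k) * ∏ α ∈ univ.erase k, (u k - u α))⁻¹ * ((y - u k)^(m+1))⁻¹)
      = ∑ k : Fin N, (-((-1:ℂ)^m)) *
          (((x - u k) * ∏ α ∈ univ.erase k, (u k - u α))⁻¹ * ((y - u k)^(m+1))⁻¹) from by
    rw [Finset.mul_sum, sub_add_eq_sub_sub, sub_self, zero_sub, ← Finset.sum_neg_distrib]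
    exact Finset.sum_congr rfl fun k _ => by ring]
  refine Finset.sum_congr rfl fun k _ => ?_
  have hyk : u k - y ≠ 0 := sub_ne_zero.mpr (hy k).symm
  have hsign : ((-1:ℂ)^m * (-1)^(m+1)) = -1 := by
    rw [← pow_add, show m + (m+1) = 2*m+1 by ring, pow_succ, pow_mul]
    norm_num
  have hpow : (y - u k)^(m+1) = (-1:ℂ)^(m+1) * (u k - y)^(m+1) := by
    rw [show (y - u k) = -(u k - y) by ring]; rw [neg_pow]
  have hinv1 : ((-1:ℂ)^(m+1))⁻¹ = (-1:ℂ)^(m+1) := by rw [← inv_pow, inv_neg, inv_one]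
  rw [hpow, one_div, mul_assoc, mul_inv, mul_inv ((-1:ℂ)^(m+1)), hinv1]
  linear_combination ((((u k - y)^(m+1))⁻¹) *
    (((x - u k) * ∏ α ∈ univ.erase k, (u k - u α))⁻¹)) * hsign
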